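/- arXiv:2007.10586 — 5 statements merged into one kernel-verified Lean document; each statement's English description precedes it below -/
import Mathlib

section
/- Let A and B be symmetric matrices of sizes l×l and p×p respectively, with A positive definite and B negative definite, and let C be an l×p matrix. Then the block matrix S = [[A, C],[Cᵀ, B]] is invertible. -/
open Matrix

theorem block_matrix_invertible
    {l p : ℕ} (A : Matrix (Fin l) (Fin l) ℝ) (B : Matrix (Fin p) (Fin p) ℝ)
    (C : Matrix (Fin l) (Fin p) ℝ)
    (hAs : A.IsSymm) (hBs : B.IsSymm)
    (hA : A.PosDef) (hB : (-B).PosDef) :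
    IsUnit (Matrix.fromBlocks A C Cᵀ B) := by
  letI := hA.isUnit.invertible
  rw [Matrix.isUnit_iff_isUnit_det, Matrix.det_fromBlocks₁₁]
  have hAinv : (A⁻¹).PosDef := hA.inv
  have hSemi : (Cᵀ * A⁻¹ * C).PosSemidef := by
    have := hAinv.posSemidef.conjTranspose_mul_mul_same C
    simpa [Matrix.conjTranspose_eq_transpose_of_trivial] using this
  have hSchur : (-(B - Cᵀ * ⅟A * C)).PosDef := by
    rw [Matrix.invOf_eq_nonsing_inv]
    have : -(B - Cᵀ * A⁻¹ * C) = -B + Cᵀ * A⁻¹ * C := by rw [neg_sub, sub_eq_neg_add]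
    rw [this]
    exact hB.add_posSemidef hSemi
  have : IsUnit (B - Cᵀ * ⅟A * C) := by
    rw [← IsUnit.neg_iff, Matrix.isUnit_iff_isUnit_det]
    exact hSchur.det_pos.ne'.isUnit
  exact (hA.det_pos.ne'.isUnit).mul ((Matrix.isUnit_iff_isUnit_det _).mp this)
end

section
/- For vectors a ∈ ℝ^l, b ∈ ℝ^p and the block matrix S = [[A, C],[Cᵀ, B]] with A positive definite and B negative definite invertible, the quadratic identity −bᵀ B⁻¹ b + (a,b)ᵀ S⁻¹ (a,b) = (a − C B⁻¹ b)ᵀ (A − C B⁻¹ Cᵀ)⁻¹ (a − C B⁻¹ b) holds. -/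
open Matrix

private lemma symm_dot {n : ℕ} (M : Matrix (Fin n) (Fin n) ℝ) (hM : M.IsSymm)
    (x y : Fin n → ℝ) : x ⬝ᵥ (M *ᵥ y) = y ⬝ᵥ (M *ᵥ x) := by
  rw [Matrix.dotProduct_mulVec, ← Matrix.mulVec_transpose, hM.eq, dotProduct_comm]

private lemma trans_dot {m n : ℕ} (M : Matrix (Fin m) (Fin n) ℝ)
    (x : Fin n → ℝ) (y : Fin m → ℝ) : x ⬝ᵥ (Mᵀ *ᵥ y) = (M *ᵥ x) ⬝ᵥ y := by
  rw [Matrix.mulVec_transpose, dotProduct_comm, ← Matrix.dotProduct_mulVec, dotProduct_comm]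

theorem block_inverse_quadratic_identity
    {l p : ℕ} (A : Matrix (Fin l) (Fin l) ℝ) (B : Matrix (Fin p) (Fin p) ℝ)
    (C : Matrix (Fin l) (Fin p) ℝ)
    (hAs : A.IsSymm) (hBs : B.IsSymm)
    (hA : A.PosDef) (hB : (-B).PosDef)
    (a : Fin l → ℝ) (b : Fin p → ℝ) :
    -(b ⬝ᵥ (B⁻¹ *ᵥ b))
      + (Sum.elim a b) ⬝ᵥ ((Matrix.fromBlocks A C Cᵀ B)⁻¹ *ᵥ Sum.elim a b)
    = (a - C *ᵥ (B⁻¹ *ᵥ b)) ⬝ᵥ ((A - C * B⁻¹ * Cᵀ)⁻¹ *ᵥ (a - C *ᵥ (B⁻¹ *ᵥ b))) := by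
  haveI hnB : Invertible (-B) := hB.isUnit.invertible
  haveI hBi : Invertible B := (neg_neg B) ▸ (invertibleNeg (-B))
  -- symmetry of B⁻¹
  have hBinvs : (B⁻¹).IsSymm := by
    rw [Matrix.IsSymm, Matrix.transpose_nonsing_inv, hBs.eq]
  -- the Schur complement is positive definite
  have hLpd : (A - C * B⁻¹ * Cᵀ).PosDef := by
    have h1 : ((-B)⁻¹).PosDef := hB.inv
    have h2 : (C * (-B)⁻¹ * Cᴴ).PosSemidef :=
      h1.posSemidef.mul_mul_conjTranspose_same C
    have hni : (-B)⁻¹ = -(B⁻¹) := Matrix.inv_eq_right_inv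
      (by rw [Matrix.neg_mul, Matrix.mul_neg, neg_neg, Matrix.mul_inv_of_invertible])
    have h3 : A - C * B⁻¹ * Cᵀ = A + C * (-B)⁻¹ * Cᴴ := by
      rw [hni]
      simp [sub_eq_add_neg, Matrix.mul_neg, Matrix.neg_mul, Matrix.conjTranspose_eq_transpose_of_trivial]
    rw [h3]
    exact hA.add_posSemidef h2
  set L := A - C * B⁻¹ * Cᵀ with hLdef
  have hLs : L.IsSymm := by
    rw [Matrix.IsSymm, hLdef, Matrix.transpose_sub, hAs.eq, Matrix.transpose_mul,
      Matrix.transpose_mul, Matrix.transpose_transpose, hBinvs.eq, Matrix.mul_assoc]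
  have hLinvs : (L⁻¹).IsSymm := by
    rw [Matrix.IsSymm, Matrix.transpose_nonsing_inv, hLs.eq]
  haveI hLi : Invertible L := hLpd.isUnit.invertible
  haveI hLi' : Invertible (A - C * ⅟B * Cᵀ) := by
    rwa [invOf_eq_nonsing_inv]
  haveI hSi : Invertible (fromBlocks A C Cᵀ B) := fromBlocks₂₂Invertible A C Cᵀ B
  have hS : (fromBlocks A C Cᵀ B)⁻¹ =
      fromBlocks L⁻¹ (-(L⁻¹ * C * B⁻¹)) (-(B⁻¹ * Cᵀ * L⁻¹))
        (B⁻¹ + B⁻¹ * Cᵀ * L⁻¹ * C * B⁻¹) := by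
    rw [← invOf_eq_nonsing_inv, invOf_fromBlocks₂₂_eq]
    simp only [invOf_eq_nonsing_inv]
    rfl
  rw [hS]
  simp only [fromBlocks_mulVec, sumElim_dotProduct_sumElim, Matrix.add_mulVec,
    Matrix.neg_mulVec, ← Matrix.mulVec_mulVec, dotProduct_add, dotProduct_neg,
    Matrix.sub_mulVec, dotProduct_sub, sub_dotProduct, Sum.elim_comp_inl, Sum.elim_comp_inr,
    Matrix.mulVec_sub]
  have key1 : ∀ x : Fin p → ℝ, b ⬝ᵥ (B⁻¹ *ᵥ x) = (B⁻¹ *ᵥ b) ⬝ᵥ x := by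
    intro x
    rw [symm_dot _ hBinvs, dotProduct_comm]
  have key2 : ∀ y : Fin l → ℝ, (B⁻¹ *ᵥ b) ⬝ᵥ (Cᵀ *ᵥ y) = (C *ᵥ (B⁻¹ *ᵥ b)) ⬝ᵥ y :=
    fun y => trans_dot C _ y
  have key3 : a ⬝ᵥ (L⁻¹ *ᵥ (C *ᵥ (B⁻¹ *ᵥ b))) = (C *ᵥ (B⁻¹ *ᵥ b)) ⬝ᵥ (L⁻¹ *ᵥ a) := by
    rw [symm_dot _ hLinvs]
  rw [key1, key1, key1, key2, key2, key3]
  ring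
end

section
/- Let p : ι → ℝ be nonnegative weights summing to 1 over a finite index set, let q : ι → ℝ, and let S ⊆ ι be a subset such that S and its complement each contain an index with positive weight. Define A(θ) = ∑_{i∈S} p(i) exp(θ q(i)) and B(θ) = ∑_{i∉S} p(i) exp(θ q(i)). If q(i) < 0 for all i ∈ S with p(i) > 0 and q(i) > 0 for all i ∉ S with p(i) > 0, then the ratio θ ↦ A(θ)/B(θ) is strictly decreasing, tends to ∞ as θ → −∞, and tends to 0 as θ → ∞. -/
open Filter Real

theorem weighted_exp_ratio_strict_anti_and_limits
    {ι : Type*} [Fintype ι] [DecidableEq ι]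
    (p q : ι → ℝ) (S : Finset ι)
    (hp : ∀ i, 0 ≤ p i) (hsum : ∑ i, p i = 1)
    (hqS : ∀ i ∈ S, 0 < p i → q i < 0)
    (hqSc : ∀ i ∈ Sᶜ, 0 < p i → 0 < q i)
    (hS : ∃ i ∈ S, 0 < p i) (hSc : ∃ i ∈ Sᶜ, 0 < p i) :
    StrictAnti (fun θ : ℝ =>
        (∑ i ∈ S, p i * Real.exp (θ * q i)) / (∑ i ∈ Sᶜ, p i * Real.exp (θ * q i)))
    ∧ Tendsto (fun θ : ℝ =>
        (∑ i ∈ S, p i * Real.exp (θ * q i)) / (∑ i ∈ Sᶜ, p i * Real.exp (θ * q i)))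
        atBot atTop
    ∧ Tendsto (fun θ : ℝ =>
        (∑ i ∈ S, p i * Real.exp (θ * q i)) / (∑ i ∈ Sᶜ, p i * Real.exp (θ * q i)))
        atTop (nhds 0) := by
  obtain ⟨i0, hi0S, hi0p⟩ := hS
  obtain ⟨j0, hj0S, hj0p⟩ := hSc
  set A : ℝ → ℝ := fun θ => ∑ i ∈ S, p i * Real.exp (θ * q i) with hA
  set B : ℝ → ℝ := fun θ => ∑ i ∈ Sᶜ, p i * Real.exp (θ * q i) with hB
  have hApos : ∀ θ, 0 < A θ := fun θ =>
    Finset.sum_pos' (fun i _ => mul_nonneg (hp i) (Real.exp_pos _).le)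
      ⟨i0, hi0S, mul_pos hi0p (Real.exp_pos _)⟩
  have hBpos : ∀ θ, 0 < B θ := fun θ =>
    Finset.sum_pos' (fun i _ => mul_nonneg (hp i) (Real.exp_pos _).le)
      ⟨j0, hj0S, mul_pos hj0p (Real.exp_pos _)⟩
  have hAanti : StrictAnti A := by
    intro θ1 θ2 h
    apply Finset.sum_lt_sum
    · intro i hi
      rcases eq_or_lt_of_le (hp i) with h0 | h0
      · simp [← h0]
      · have hq := hqS i hi h0
        exact mul_le_mul_of_nonneg_left
          (Real.exp_le_exp.mpr (by nlinarith)) (hp i)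
    · refine ⟨i0, hi0S, ?_⟩
      have hq := hqS i0 hi0S hi0p
      exact mul_lt_mul_of_pos_left
        (Real.exp_lt_exp.mpr (by nlinarith)) hi0p
  have hBmono : StrictMono B := by
    intro θ1 θ2 h
    apply Finset.sum_lt_sum
    · intro i hi
      rcases eq_or_lt_of_le (hp i) with h0 | h0
      · simp [← h0]
      · have hq := hqSc i hi h0
        exact mul_le_mul_of_nonneg_left
          (Real.exp_le_exp.mpr (by nlinarith)) (hp i)
    · refine ⟨j0, hj0S, ?_⟩
      have hq := hqSc j0 hj0S hj0p
      exact mul_lt_mul_of_pos_left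
        (Real.exp_lt_exp.mpr (by nlinarith)) hj0p
  -- A → atTop as θ → -∞
  have hAtop : Tendsto A atBot atTop := by
    have hq := hqS i0 hi0S hi0p
    have h1 : Tendsto (fun θ : ℝ => p i0 * Real.exp (θ * q i0)) atBot atTop := by
      have : Tendsto (fun θ : ℝ => θ * q i0) atBot atTop :=
        tendsto_id.atBot_mul_const_of_neg hq
      exact (Real.tendsto_exp_atTop.comp this).const_mul_atTop hi0p
    refine tendsto_atTop_mono (fun θ => ?_) h1
    exact Finset.single_le_sum (f := fun i => p i * Real.exp (θ * q i))
      (fun i _ => mul_nonneg (hp i) (Real.exp_pos _).le) hi0S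
  -- B → atTop as θ → ∞
  have hBtop : Tendsto B atTop atTop := by
    have hq := hqSc j0 hj0S hj0p
    have h1 : Tendsto (fun θ : ℝ => p j0 * Real.exp (θ * q j0)) atTop atTop := by
      have : Tendsto (fun θ : ℝ => θ * q j0) atTop atTop :=
        tendsto_id.atTop_mul_const hq
      exact (Real.tendsto_exp_atTop.comp this).const_mul_atTop hj0p
    refine tendsto_atTop_mono (fun θ => ?_) h1
    exact Finset.single_le_sum (f := fun i => p i * Real.exp (θ * q i))
      (fun i _ => mul_nonneg (hp i) (Real.exp_pos _).le) hj0S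
  -- B → 0 as θ → -∞
  have hBzero : Tendsto B atBot (nhds 0) := by
    have : Tendsto (fun θ : ℝ => ∑ i ∈ Sᶜ, p i * Real.exp (θ * q i)) atBot
        (nhds (∑ i ∈ Sᶜ, (0 : ℝ))) := by
      refine tendsto_finset_sum _ (fun i hi => ?_)
      rcases eq_or_lt_of_le (hp i) with h0 | h0
      · simpa [← h0] using tendsto_const_nhds
      · have hq := hqSc i hi h0
        have h2 : Tendsto (fun θ : ℝ => θ * q i) atBot atBot :=
          tendsto_id.atBot_mul_const hq
        simpa using (Real.tendsto_exp_atBot.comp h2).const_mul (p i)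
    simpa using this
  -- A → 0 as θ → ∞
  have hAzero : Tendsto A atTop (nhds 0) := by
    have : Tendsto (fun θ : ℝ => ∑ i ∈ S, p i * Real.exp (θ * q i)) atTop
        (nhds (∑ i ∈ S, (0 : ℝ))) := by
      refine tendsto_finset_sum _ (fun i hi => ?_)
      rcases eq_or_lt_of_le (hp i) with h0 | h0
      · simpa [← h0] using tendsto_const_nhds
      · have hq := hqS i hi h0
        have h2 : Tendsto (fun θ : ℝ => θ * q i) atTop atBot :=
          tendsto_id.atTop_mul_const_of_neg hq
        simpa using (Real.tendsto_exp_atBot.comp h2).const_mul (p i)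
    simpa using this
  refine ⟨?_, ?_, ?_⟩
  · intro θ1 θ2 h
    have h1 := hAanti h
    have h2 := hBmono h
    have b1 := hBpos θ1
    have b2 := hBpos θ2
    have a2 := hApos θ2
    rw [div_lt_div_iff₀ b2 b1]
    nlinarith
  · have hBinv : Tendsto (fun θ => (B θ)⁻¹) atBot atTop := by
      have : Tendsto B atBot (nhdsWithin 0 (Set.Ioi 0)) :=
        tendsto_nhdsWithin_of_tendsto_nhds_of_eventually_within _ hBzero
          (Eventually.of_forall fun θ => hBpos θ)
      exact tendsto_inv_nhdsGT_zero.comp this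
    simpa [div_eq_mul_inv] using hAtop.atTop_mul_atTop₀ hBinv
  · have hBinv : Tendsto (fun θ => (B θ)⁻¹) atTop (nhds 0) := hBtop.inv_tendsto_atTop
    simpa [div_eq_mul_inv] using hAzero.mul hBinv
end

section
/- Under the setup of the preceding monotone ratio lemma, for every τ ∈ (0,1) there exists θ* ∈ ℝ such that A(θ*)/B(θ*) = τ/(1−τ). Consequently, setting c = −log(A(θ*) + B(θ*)), the weights p(i)·exp(c + θ*·q(i)) sum to 1 over ι and the sum over S equals τ. -/
open Real Filter

theorem exists_theta_star_matching_quantile_ratio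
    {ι : Type*} [Fintype ι] [DecidableEq ι]
    (p q : ι → ℝ) (S : Finset ι)
    (hp : ∀ i, 0 ≤ p i) (hsum : ∑ i, p i = 1)
    (hqS : ∀ i ∈ S, 0 < p i → q i < 0)
    (hqSc : ∀ i ∈ Sᶜ, 0 < p i → 0 < q i)
    (hS : ∃ i ∈ S, 0 < p i) (hSc : ∃ i ∈ Sᶜ, 0 < p i)
    (τ : ℝ) (hτ : τ ∈ Set.Ioo (0 : ℝ) 1) :
    ∃ θ : ℝ,
      (∑ i ∈ S, p i * Real.exp (θ * q i)) / (∑ i ∈ Sᶜ, p i * Real.exp (θ * q i))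
          = τ / (1 - τ)
      ∧ (∑ i, p i * Real.exp
            (-Real.log ((∑ j ∈ S, p j * Real.exp (θ * q j))
                + ∑ j ∈ Sᶜ, p j * Real.exp (θ * q j)) + θ * q i)) = 1
      ∧ (∑ i ∈ S, p i * Real.exp
            (-Real.log ((∑ j ∈ S, p j * Real.exp (θ * q j))
                + ∑ j ∈ Sᶜ, p j * Real.exp (θ * q j)) + θ * q i)) = τ := by
  obtain ⟨hτ0, hτ1⟩ := hτ
  have h1τ : 0 < 1 - τ := by linarith
  obtain ⟨i1, hi1S, hpi1⟩ := hS
  obtain ⟨i0, hi0S, hpi0⟩ := hSc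
  set A : ℝ → ℝ := fun θ => ∑ i ∈ S, p i * Real.exp (θ * q i) with hA
  set B : ℝ → ℝ := fun θ => ∑ i ∈ Sᶜ, p i * Real.exp (θ * q i) with hB
  have hterm : ∀ (θ : ℝ) i, 0 ≤ p i * Real.exp (θ * q i) := fun θ i =>
    mul_nonneg (hp i) (Real.exp_pos _).le
  have hAge : ∀ θ, p i1 * Real.exp (θ * q i1) ≤ A θ := fun θ =>
    Finset.single_le_sum (fun i _ => hterm θ i) hi1S
  have hBge : ∀ θ, p i0 * Real.exp (θ * q i0) ≤ B θ := fun θ =>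
    Finset.single_le_sum (fun i _ => hterm θ i) hi0S
  have hApos : ∀ θ, 0 < A θ := fun θ =>
    lt_of_lt_of_le (mul_pos hpi1 (Real.exp_pos _)) (hAge θ)
  have hBpos : ∀ θ, 0 < B θ := fun θ =>
    lt_of_lt_of_le (mul_pos hpi0 (Real.exp_pos _)) (hBge θ)
  set g : ℝ → ℝ := fun θ => (1 - τ) * A θ - τ * B θ with hg
  have hcont : Continuous g := by
    apply Continuous.sub
    · exact continuous_const.mul (continuous_finset_sum _ fun i _ =>
        continuous_const.mul ((continuous_id.mul continuous_const).rexp))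
    · exact continuous_const.mul (continuous_finset_sum _ fun i _ =>
        continuous_const.mul ((continuous_id.mul continuous_const).rexp))
  -- A → 0 at atTop
  have hA0 : Tendsto A atTop (nhds 0) := by
    rw [hA]
    have : Tendsto (fun θ : ℝ => ∑ i ∈ S, p i * Real.exp (θ * q i)) atTop
        (nhds (∑ i ∈ S, (0:ℝ))) := by
      apply tendsto_finset_sum
      intro i hi
      rcases eq_or_lt_of_le (hp i) with h | h
      · simp [← h]
      · have hq : q i < 0 := hqS i hi h
        have : Tendsto (fun θ : ℝ => θ * q i) atTop atBot :=
          tendsto_id.atTop_mul_const_of_neg hq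
        have := (Real.tendsto_exp_atBot).comp this
        simpa using this.const_mul (p i)
    simpa using this
  have hB0 : Tendsto B atBot (nhds 0) := by
    rw [hB]
    have : Tendsto (fun θ : ℝ => ∑ i ∈ Sᶜ, p i * Real.exp (θ * q i)) atBot
        (nhds (∑ i ∈ Sᶜ, (0:ℝ))) := by
      apply tendsto_finset_sum
      intro i hi
      rcases eq_or_lt_of_le (hp i) with h | h
      · simp [← h]
      · have hq : 0 < q i := hqSc i hi h
        have : Tendsto (fun θ : ℝ => θ * q i) atBot atBot :=
          tendsto_id.atBot_mul_const hq
        have := (Real.tendsto_exp_atBot).comp this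
        simpa using this.const_mul (p i)
    simpa using this
  have hAtop : Tendsto A atBot atTop := by
    apply tendsto_atTop_mono hAge
    have hq : q i1 < 0 := hqS i1 hi1S hpi1
    have h1 : Tendsto (fun θ : ℝ => θ * q i1) atBot atTop :=
      tendsto_id.atBot_mul_const_of_neg hq
    exact (Real.tendsto_exp_atTop.comp h1).const_mul_atTop hpi1
  have hBtop : Tendsto B atTop atTop := by
    apply tendsto_atTop_mono hBge
    have hq : 0 < q i0 := hqSc i0 hi0S hpi0
    have h1 : Tendsto (fun θ : ℝ => θ * q i0) atTop atTop :=
      tendsto_id.atTop_mul_const hq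
    exact (Real.tendsto_exp_atTop.comp h1).const_mul_atTop hpi0
  have hgtop : Tendsto g atBot atTop := by
    have h1 : Tendsto (fun θ => (1 - τ) * A θ) atBot atTop :=
      hAtop.const_mul_atTop h1τ
    have h2 : Tendsto (fun θ => -(τ * B θ)) atBot (nhds 0) := by
      have := (hB0.const_mul τ).neg
      simpa using this
    refine (h2.add_atTop h1).congr fun x => ?_
    simp only [hg]; ring
  have hgbot : Tendsto g atTop atBot := by
    have h1 : Tendsto (fun θ => (1 - τ) * A θ) atTop (nhds ((1 - τ) * 0)) :=
      hA0.const_mul (1 - τ)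
    have h2 : Tendsto (fun θ => τ * B θ) atTop atTop :=
      hBtop.const_mul_atTop hτ0
    have h3 : Tendsto (fun θ => (-τ) * B θ) atTop atBot :=
      hBtop.const_mul_atTop_of_neg (by linarith)
    have h4 : Tendsto (fun θ => (1 - τ) * A θ) atTop (nhds 0) := by simpa using h1
    refine (h4.add_atBot h3).congr fun x => ?_
    simp only [hg]; ring
  obtain ⟨t1, ht1⟩ := (hgtop.eventually_gt_atTop 0).exists
  obtain ⟨t2, ht2⟩ := (hgbot.eventually_lt_atBot 0).exists
  have hmem : (0:ℝ) ∈ Set.uIcc (g t1) (g t2) :=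
    Set.mem_uIcc.2 (Or.inr ⟨ht2.le, ht1.le⟩)
  obtain ⟨θ, _, hθ⟩ := intermediate_value_uIcc (hcont.continuousOn (s := Set.uIcc t1 t2)) hmem
  have key : (1 - τ) * A θ = τ * B θ := by
    have h0 : g θ = 0 := hθ
    rw [hg] at h0; simp only at h0; linarith
  have hABpos : 0 < A θ + B θ := add_pos (hApos θ) (hBpos θ)
  refine ⟨θ, ?_, ?_, ?_⟩
  · rw [div_eq_div_iff (hBpos θ).ne' h1τ.ne']
    linarith [key]
  · have : (∑ i, p i * Real.exp (-Real.log (A θ + B θ) + θ * q i))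
        = Real.exp (-Real.log (A θ + B θ)) * ∑ i, p i * Real.exp (θ * q i) := by
      rw [Finset.mul_sum]
      congr 1; ext i; rw [Real.exp_add]; ring
    have hsplit : (∑ i, p i * Real.exp (θ * q i)) = A θ + B θ := by
      rw [hA, hB]
      exact (Finset.sum_add_sum_compl S _).symm
    rw [show (∑ i, p i * Real.exp
            (-Real.log ((∑ j ∈ S, p j * Real.exp (θ * q j))
                + ∑ j ∈ Sᶜ, p j * Real.exp (θ * q j)) + θ * q i))
        = (∑ i, p i * Real.exp (-Real.log (A θ + B θ) + θ * q i)) from rfl,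
      this, hsplit, Real.exp_neg, Real.exp_log hABpos]
    field_simp
  · have : (∑ i ∈ S, p i * Real.exp (-Real.log (A θ + B θ) + θ * q i))
        = Real.exp (-Real.log (A θ + B θ)) * A θ := by
      rw [hA, Finset.mul_sum]
      congr 1; ext i; rw [Real.exp_add]; ring
    rw [show (∑ i ∈ S, p i * Real.exp
            (-Real.log ((∑ j ∈ S, p j * Real.exp (θ * q j))
                + ∑ j ∈ Sᶜ, p j * Real.exp (θ * q j)) + θ * q i))
        = (∑ i ∈ S, p i * Real.exp (-Real.log (A θ + B θ) + θ * q i)) from rfl,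
      this, Real.exp_neg, Real.exp_log hABpos]
    rw [inv_mul_eq_div, div_eq_iff hABpos.ne']
    linarith [key]
end

section
/- Let S be an invertible symmetric block matrix with blocks S_λλ, S_λθ, S_θλ = S_λθᵀ, S_θθ, where S_λλ is positive definite and S_θθ is negative definite, and let W be a positive semidefinite matrix acting only on the θ-block (i.e., W = diag(0, W₀) with W₀ psd). Define V = diag(S_λλ, −S_θθ) − S W S and D = [I, −S_λθ S_θθ⁻¹]. Then D V Dᵀ = S_λλ − S_λθ S_θθ⁻¹ S_λθᵀ. -/
open Matrix

theorem DVD_transpose_eq_schur_complement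
    {l p : ℕ}
    (Sll : Matrix (Fin l) (Fin l) ℝ) (Slt : Matrix (Fin l) (Fin p) ℝ)
    (Stt : Matrix (Fin p) (Fin p) ℝ) (W₀ : Matrix (Fin p) (Fin p) ℝ)
    (hSlls : Sll.IsSymm) (hStts : Stt.IsSymm)
    (hSll : Sll.PosDef) (hStt : (-Stt).PosDef) (hW₀ : W₀.PosSemidef)
    (S : Matrix (Fin l ⊕ Fin p) (Fin l ⊕ Fin p) ℝ)
    (hS : S = Matrix.fromBlocks Sll Slt Sltᵀ Stt)
    (hSu : IsUnit S.det)
    (W V : Matrix (Fin l ⊕ Fin p) (Fin l ⊕ Fin p) ℝ)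
    (hW : W = Matrix.fromBlocks 0 0 0 W₀)
    (hV : V = Matrix.fromBlocks Sll 0 0 (-Stt) - S * W * S)
    (D : Matrix (Fin l) (Fin l ⊕ Fin p) ℝ)
    (hD : D = Matrix.fromCols 1 (-(Slt * Stt⁻¹))) :
    D * V * Dᵀ = Sll - Slt * Stt⁻¹ * Sltᵀ := by
  have hSttu : IsUnit Stt.det := by
    have h := hStt.det_pos
    have hd : (-Stt).det = (-1 : ℝ) ^ p * Stt.det := by
      simp [Matrix.det_neg]
    have : Stt.det ≠ 0 := by
      intro h0
      rw [hd, h0, mul_zero] at h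
      exact lt_irrefl _ h
    exact isUnit_iff_ne_zero.mpr this
  have hinv : Stt⁻¹ * Stt = 1 := Matrix.nonsing_inv_mul _ hSttu
  have hinv' : Stt * Stt⁻¹ = 1 := Matrix.mul_nonsing_inv _ hSttu
  have hinvT : (Stt⁻¹)ᵀ = Stt⁻¹ := by
    rw [Matrix.transpose_nonsing_inv, hStts.eq]
  subst hS hW hV hD
  have hDS : Matrix.fromCols (1 : Matrix (Fin l) (Fin l) ℝ) (-(Slt * Stt⁻¹)) * Matrix.fromBlocks Sll Slt Sltᵀ Stt
      = Matrix.fromCols (Sll - Slt * Stt⁻¹ * Sltᵀ) 0 := by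
    rw [Matrix.fromCols_mul_fromBlocks]
    simp [Matrix.mul_assoc, hinv, sub_eq_add_neg]
  rw [Matrix.mul_sub, Matrix.sub_mul]
  have hzero : Matrix.fromCols (1 : Matrix (Fin l) (Fin l) ℝ) (-(Slt * Stt⁻¹)) *
      (Matrix.fromBlocks Sll Slt Sltᵀ Stt * Matrix.fromBlocks 0 0 0 W₀ *
        Matrix.fromBlocks Sll Slt Sltᵀ Stt) *
      (Matrix.fromCols (1 : Matrix (Fin l) (Fin l) ℝ) (-(Slt * Stt⁻¹)))ᵀ = (0 : Matrix (Fin l) (Fin l) ℝ) := by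
    have : Matrix.fromCols (1 : Matrix (Fin l) (Fin l) ℝ) (-(Slt * Stt⁻¹)) *
        (Matrix.fromBlocks Sll Slt Sltᵀ Stt * Matrix.fromBlocks 0 0 0 W₀)
        = (0 : Matrix (Fin l) (Fin l ⊕ Fin p) ℝ) := by
      rw [← Matrix.mul_assoc (Matrix.fromCols (1 : Matrix (Fin l) (Fin l) ℝ) (-(Slt * Stt⁻¹)))
        (Matrix.fromBlocks Sll Slt Sltᵀ Stt) (Matrix.fromBlocks 0 0 0 W₀), hDS,
        Matrix.fromCols_mul_fromBlocks]
      ext i j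
      cases j <;> simp [Matrix.fromCols]
    rw [← Matrix.mul_assoc (Matrix.fromCols (1 : Matrix (Fin l) (Fin l) ℝ) (-(Slt * Stt⁻¹)))
      (Matrix.fromBlocks Sll Slt Sltᵀ Stt * Matrix.fromBlocks 0 0 0 W₀)
      (Matrix.fromBlocks Sll Slt Sltᵀ Stt), this]
    simp
  rw [hzero, sub_zero]
  rw [Matrix.fromCols_mul_fromBlocks, Matrix.transpose_fromCols,
    Matrix.fromCols_mul_fromRows]
  simp only [Matrix.one_mul, Matrix.mul_zero, Matrix.zero_mul, Matrix.mul_one,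
    Matrix.transpose_one, Matrix.transpose_neg, Matrix.transpose_mul, hinvT,
    Matrix.mul_neg, Matrix.neg_mul, neg_neg, Matrix.mul_assoc, add_zero, zero_add]
  rw [← Matrix.mul_assoc Stt, hinv', Matrix.one_mul]
  abel
end
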